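/- Let P ⊆ nA* be a finite joinless code and set k_i = max{|v_i| : (v_1,…,v_n) ∈ P} for each i ∈ {1,…,n}. Then P is maximal as a joinless code if and only if P can be transformed into the box code A^{k_1} × … × A^{k_n} by a finite sequence of one-step restrictions. -/

import Mathlib

namespace BrinThompson

abbrev W (A : Type*) (n : ℕ) : Type _ := Fin n → List A

variable {A : Type*} {n : ℕ}

/-- Coordinatewise concatenation in `nA*`. -/
def cat (u x : W A n) : W A n := fun i => u i ++ x i

/-- `u ≤_init v` : `u` is an initial factor of `v`. -/
def initLE (u v : W A n) : Prop := ∃ x : W A n, v = cat u x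

/-- `w` is the join (least upper bound) of `u` and `v` w.r.t. `≤_init`. -/
def isJoin (u v w : W A n) : Prop :=
  initLE u w ∧ initLE v w ∧ ∀ z : W A n, initLE u z → initLE v z → initLE w z

/-- `u` and `v` have a join. -/
def HasJoin (u v : W A n) : Prop := ∃ w : W A n, isJoin u v w

/-- A joinless code: no two distinct elements have a join. -/
def JoinlessCode (S : Set (W A n)) : Prop :=
  ∀ u ∈ S, ∀ v ∈ S, u ≠ v → ¬ HasJoin u v

/-- A maximal joinless code: joinless, and every element of `nA*` has a join
with some element of the code. -/
def MaxJoinlessCode (S : Set (W A n)) : Prop :=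
  JoinlessCode S ∧ ∀ x : W A n, ∃ p ∈ S, HasJoin x p

/-- The right ideal `C · nA*` generated by `C`. -/
def genIdeal (C : Set (W A n)) : Set (W A n) := {w | ∃ c ∈ C, ∃ x : W A n, w = cat c x}

def IsRightIdeal (R : Set (W A n)) : Prop := genIdeal R = R

/-- An initial factor code: pairwise `≤_init`-incomparable set. -/
def InitFactorCode (S : Set (W A n)) : Prop :=
  ∀ u ∈ S, ∀ v ∈ S, initLE u v → u = v

/-- `A_{ε,n}`: tuples with one coordinate a single letter and the rest empty. -/
def Aeps (A : Type*) (n : ℕ) : Set (W A n) :=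
  {w | ∃ i : Fin n, ∃ a : A, w i = [a] ∧ ∀ j : Fin n, j ≠ i → w j = []}

/-- `(ε)^n`, the tuple of empty strings. -/
def epsn (A : Type*) (n : ℕ) : W A n := fun _ => []

/-- `nA^ω`: `n`-tuples of one-sided infinite sequences over `A`. -/
abbrev Winf (A : Type*) (n : ℕ) : Type _ := Fin n → ℕ → A

/-- Concatenation of a finite tuple `p ∈ nA*` with an infinite tuple `u ∈ nA^ω`. -/
def catInf (p : W A n) (u : Winf A n) : Winf A n :=
  fun i k => if h : k < (p i).length then (p i).get ⟨k, h⟩ else u i (k - (p i).length)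

/-- `v` is an interior vertex of the `P`-dag: a strict initial factor of
some element of `P`. -/
def Interior (P : Set (W A n)) (v : W A n) : Prop := ∃ p ∈ P, initLE v p ∧ v ≠ p

/-- The child of `v` in direction `i`, extended by letter `a`. -/
def child (v : W A n) (i : Fin n) (a : A) : W A n := Function.update v i (v i ++ [a])

/-- A leaf of the interior dag of `P`: an interior vertex none of whose
children is interior. -/
def InteriorLeaf (P : Set (W A n)) (v : W A n) : Prop :=
  Interior P v ∧ ∀ (i : Fin n) (a : A), ¬ Interior P (child v i a)

/-- `v_+ = (v · A_{ε,n}) ∩ P`, the set of children of `v` belonging to `P`. -/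
def vplus (P : Set (W A n)) (v : W A n) : Set (W A n) :=
  {w | (∃ (i : Fin n) (a : A), w = child v i a) ∧ w ∈ P}

/-- The depth of a vertex: the sum of the coordinate lengths. -/
def depth (v : W A n) : ℕ := ∑ i, (v i).length

/-- One-step restriction of `P` at `(p, i)`. -/
def oneStep (P : Set (W A n)) (p : W A n) (i : Fin n) : Set (W A n) :=
  (P \ {p}) ∪ {w | ∃ a : A, w = child p i a}

/-- One step in a sequence of one-step restrictions. -/
def RestrStep (P Q : Set (W A n)) : Prop := ∃ p ∈ P, ∃ i : Fin n, Q = oneStep P p i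

/-- The box code `A^{k_1} × … × A^{k_n}`. -/
def box (A : Type*) {n : ℕ} (k : Fin n → ℕ) : Set (W A n) :=
  {w | ∀ i : Fin n, (w i).length = k i}

/-- Elementwise join `P ∨ Q` of two sets, ranging over the joins that exist. -/
def setJoin (P Q : Set (W A n)) : Set (W A n) :=
  {w | ∃ p ∈ P, ∃ q ∈ Q, isJoin p q w}

/-- `ℓ(S)`: the maximum coordinate length occurring in `S`. -/
noncomputable def ell (S : Set (W A n)) : ℕ :=
  sSup {m | ∃ z ∈ S, ∃ i : Fin n, (z i).length = m}

/-- An element of `n RI^fin_A`: an injective right ideal morphism of `nA*`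
whose domain code and image code are finite maximal joinless codes.
`toFun` is a total function whose values outside `Dom` are irrelevant. -/
structure RIMfin (A : Type*) (n : ℕ) where
  Dom : Set (W A n)
  toFun : W A n → W A n
  domC : Set (W A n)
  imC : Set (W A n)
  ideal : IsRightIdeal Dom
  morph : ∀ x ∈ Dom, ∀ w : W A n, toFun (cat x w) = cat (toFun x) w
  inj : Set.InjOn toFun Dom
  domC_gen : genIdeal domC = Dom
  imC_gen : genIdeal imC = toFun '' Dom
  domC_fin : domC.Finite
  domC_max : MaxJoinlessCode domC
  imC_fin : imC.Finite
  imC_max : MaxJoinlessCode imC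

/-- `ℓ(f) = max{ℓ(z) : z ∈ domC(f) ∪ imC(f)}`. -/
noncomputable def ellF (F : RIMfin A n) : ℕ := ell (F.domC ∪ F.imC)

/-- `G` extends `F` (as partial functions). -/
def Extends (F G : RIMfin A n) : Prop :=
  F.Dom ⊆ G.Dom ∧ ∀ x ∈ F.Dom, G.toFun x = F.toFun x

/-- `F` and `G` are equal as partial functions. -/
def EquivRIM (F G : RIMfin A n) : Prop :=
  F.Dom = G.Dom ∧ ∀ x ∈ F.Dom, F.toFun x = G.toFun x

/-- `G` is a maximal extension of `F` in `n RI^fin_A`. -/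
def MaxExtension (F G : RIMfin A n) : Prop :=
  Extends F G ∧ ∀ H : RIMfin A n, Extends G H → EquivRIM G H



section AuxLemmas
variable {A : Type*} {n : ℕ}

lemma initLE_iff {u v : W A n} : initLE u v ↔ ∀ i, u i <+: v i := by
  constructor
  · rintro ⟨x, rfl⟩ i; exact ⟨x i, rfl⟩
  · intro h
    refine ⟨fun i => (v i).drop (u i).length, ?_⟩
    funext i
    obtain ⟨t, ht⟩ := h i
    simp [cat, ← ht]

lemma hasJoin_iff {u v : W A n} :
    HasJoin u v ↔ ∀ i, u i <+: v i ∨ v i <+: u i := by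
  constructor
  · rintro ⟨w, hw⟩ i
    exact List.prefix_or_prefix_of_prefix (initLE_iff.1 hw.1 i) (initLE_iff.1 hw.2.1 i)
  · intro h
    refine ⟨fun i => if (u i).length ≤ (v i).length then v i else u i, ?_, ?_, ?_⟩
    · rw [initLE_iff]; intro i; split_ifs with hle
      · rcases h i with h' | h'
        · exact h'
        · rw [h'.eq_of_length_le hle]
      · exact List.prefix_rfl
    · rw [initLE_iff]; intro i; split_ifs with hle
      · exact List.prefix_rfl
      · rcases h i with h' | h'
        · rw [h'.eq_of_length_le (le_of_not_ge hle)]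
        · exact h'
    · intro z hu hv
      rw [initLE_iff] at hu hv ⊢
      intro i; split_ifs with hle
      · exact hv i
      · exact hu i

lemma hasJoin_of_ub {u v z : W A n} (hu : initLE u z) (hv : initLE v z) : HasJoin u v :=
  hasJoin_iff.2 fun i =>
    List.prefix_or_prefix_of_prefix (initLE_iff.1 hu i) (initLE_iff.1 hv i)

lemma hasJoin_comm {u v : W A n} (h : HasJoin u v) : HasJoin v u :=
  hasJoin_iff.2 fun i => (hasJoin_iff.1 h i).symm

lemma child_apply_self (v : W A n) (i : Fin n) (a : A) : child v i a i = v i ++ [a] :=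
  Function.update_self _ _ _

lemma child_apply_ne (v : W A n) (i : Fin n) (a : A) {j : Fin n} (h : j ≠ i) :
    child v i a j = v j := Function.update_of_ne h _ _

lemma prefix_child (v : W A n) (i : Fin n) (a : A) (j : Fin n) : v j <+: child v i a j := by
  rcases eq_or_ne j i with rfl | hj
  · rw [child_apply_self]; exact ⟨[a], rfl⟩
  · rw [child_apply_ne _ _ _ hj]

lemma child_ne (v : W A n) (i : Fin n) (a : A) : child v i a ≠ v := by
  intro h
  have := congrFun h i
  rw [child_apply_self] at this
  simpa using congrArg List.length this

lemma child_inj {v : W A n} {i : Fin n} {a b : A} (h : child v i a = child v i b) : a = b := by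
  have := congrFun h i
  rw [child_apply_self, child_apply_self] at this
  simpa using this

lemma hasJoin_of_child {u p : W A n} {i : Fin n} {a : A}
    (h : HasJoin u (child p i a)) : HasJoin u p := by
  rw [hasJoin_iff] at h ⊢
  intro j
  rcases h j with h' | h'
  · exact List.prefix_or_prefix_of_prefix h' (prefix_child p i a j)
  · exact Or.inr ((prefix_child p i a j).trans h')

lemma box_max [Nonempty A] (k : Fin n → ℕ) : MaxJoinlessCode (box A k) := by
  constructor
  · intro u hu v hv hne hj
    apply hne
    funext i
    rcases hasJoin_iff.1 hj i with h | h
    · exact h.eq_of_length_le (by rw [hu i, hv i])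
    · exact (h.eq_of_length_le (by rw [hu i, hv i])).symm
  · intro x
    obtain ⟨a⟩ := ‹Nonempty A›
    refine ⟨fun i => (x i).take (k i) ++ List.replicate (k i - (x i).length) a, ?_, ?_⟩
    · intro i
      simp only [List.length_append, List.length_take, List.length_replicate]
      omega
    · rw [hasJoin_iff]
      intro i
      rcases le_or_gt (x i).length (k i) with hle | hlt
      · left
        rw [List.take_of_length_le hle]
        exact ⟨_, rfl⟩
      · right
        rw [Nat.sub_eq_zero_of_le hlt.le, List.replicate_zero, List.append_nil]
        exact List.take_prefix _ _

end AuxLemmas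


section StepLemmas
variable {A : Type*} {n : ℕ}

lemma mem_oneStep {P : Set (W A n)} {p : W A n} {i : Fin n} {w : W A n} :
    w ∈ oneStep P p i ↔ (w ∈ P ∧ w ≠ p) ∨ ∃ a : A, w = child p i a := by
  simp [oneStep, Set.mem_diff, Set.mem_union]

lemma oneStep_joinless {P : Set (W A n)} (hjl : JoinlessCode P) {p : W A n} (hp : p ∈ P)
    (i : Fin n) : JoinlessCode (oneStep P p i) := by
  intro u hu v hv hne hj
  rcases mem_oneStep.1 hu with ⟨hu, hup⟩ | ⟨a, rfl⟩
  · rcases mem_oneStep.1 hv with ⟨hv, hvp⟩ | ⟨a, rfl⟩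
    · exact hjl u hu v hv hne hj
    · exact hjl u hu p hp hup (hasJoin_of_child hj)
  · rcases mem_oneStep.1 hv with ⟨hv, hvp⟩ | ⟨b, rfl⟩
    · exact hjl v hv p hp hvp (hasJoin_of_child (hasJoin_comm hj))
    · have hab : a ≠ b := fun h => hne (by rw [h])
      apply hab
      have h := hasJoin_iff.1 hj i
      rw [child_apply_self, child_apply_self] at h
      rcases h with h | h
      · have := h.eq_of_length_le (by simp)
        simpa using this
      · have := h.eq_of_length_le (by simp)
        simpa using this.symm

lemma child_not_mem {P : Set (W A n)} (hjl : JoinlessCode P) {p : W A n} (hp : p ∈ P)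
    {i : Fin n} {a : A} {q : W A n} (hq : q ∈ P) (hqp : q ≠ p) : q ≠ child p i a := by
  rintro rfl
  exact hjl p hp _ hq (Ne.symm hqp)
    (hasJoin_of_ub (initLE_iff.2 (prefix_child p i a)) (initLE_iff.2 fun j => List.prefix_rfl))

lemma oneStep_maximal [Nonempty A] {P : Set (W A n)} (hmax : MaxJoinlessCode P)
    {p : W A n} (hp : p ∈ P) (i : Fin n) : MaxJoinlessCode (oneStep P p i) := by
  refine ⟨oneStep_joinless hmax.1 hp i, ?_⟩
  intro x
  obtain ⟨q, hq, hjq⟩ := hmax.2 x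
  rcases eq_or_ne q p with rfl | hqp
  · -- x has a join with p; find a child of p it joins with
    rcases hasJoin_iff.1 hjq i with h | h
    · -- x i <+: p i : any child works
      obtain ⟨a⟩ := ‹Nonempty A›
      refine ⟨child q i a, mem_oneStep.2 (Or.inr ⟨a, rfl⟩), hasJoin_iff.2 fun j => ?_⟩
      rcases eq_or_ne j i with rfl | hj
      · rw [child_apply_self]; exact Or.inl (h.trans ⟨[a], rfl⟩)
      · rw [child_apply_ne _ _ _ hj]; exact hasJoin_iff.1 hjq j
    · -- p i <+: x i
      obtain ⟨t, ht⟩ := h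
      cases t with
      | nil =>
        obtain ⟨a⟩ := ‹Nonempty A›
        refine ⟨child q i a, mem_oneStep.2 (Or.inr ⟨a, rfl⟩), hasJoin_iff.2 fun j => ?_⟩
        rcases eq_or_ne j i with rfl | hj
        · rw [child_apply_self]
          exact Or.inl (by rw [← ht, List.append_nil]; exact ⟨[a], rfl⟩)
        · rw [child_apply_ne _ _ _ hj]; exact hasJoin_iff.1 hjq j
      | cons b t' =>
        refine ⟨child q i b, mem_oneStep.2 (Or.inr ⟨b, rfl⟩), hasJoin_iff.2 fun j => ?_⟩
        rcases eq_or_ne j i with rfl | hj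
        · rw [child_apply_self]
          right
          rw [← ht]
          exact ⟨t', by simp⟩
        · rw [child_apply_ne _ _ _ hj]; exact hasJoin_iff.1 hjq j
  · exact ⟨q, mem_oneStep.2 (Or.inl ⟨hq, hqp⟩), hjq⟩

lemma oneStep_maximal_back {P : Set (W A n)} (hjl : JoinlessCode P)
    {p : W A n} (hp : p ∈ P) {i : Fin n}
    (hmax : MaxJoinlessCode (oneStep P p i)) : MaxJoinlessCode P := by
  refine ⟨hjl, fun x => ?_⟩
  obtain ⟨q, hq, hjq⟩ := hmax.2 x
  rcases mem_oneStep.1 hq with ⟨hq, _⟩ | ⟨a, rfl⟩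
  · exact ⟨q, hq, hjq⟩
  · exact ⟨p, hp, hasJoin_of_child hjq⟩

end StepLemmas


section MainLemmas
variable {A : Type*} {n : ℕ}

/-- Deficiency of `p` w.r.t. the length vector `k`. -/
def defic (k : Fin n → ℕ) (p : W A n) : ℕ := ∑ i, (k i - (p i).length)

lemma defic_child {k : Fin n → ℕ} {p : W A n} {i : Fin n} (a : A)
    (h : (p i).length < k i) : defic k (child p i a) + 1 = defic k p := by
  unfold defic
  rw [← Finset.add_sum_erase _ _ (Finset.mem_univ i),
    ← Finset.add_sum_erase _ (fun j => k j - (p j).length) (Finset.mem_univ i)]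
  have he : ∑ j ∈ Finset.univ.erase i, (k j - (child p i a j).length)
      = ∑ j ∈ Finset.univ.erase i, (k j - (p j).length) :=
    Finset.sum_congr rfl fun j hj => by rw [child_apply_ne _ _ _ (Finset.ne_of_mem_erase hj)]
  rw [he, child_apply_self]
  simp only [List.length_append, List.length_cons, List.length_nil]
  omega

lemma defic_pos {k : Fin n → ℕ} {p : W A n} {i : Fin n} (h : (p i).length < k i) :
    1 ≤ defic k p := by
  unfold defic
  have h2 : k i - (p i).length ≤ ∑ j, (k j - (p j).length) :=
    Finset.single_le_sum (f := fun j => k j - (p j).length) (fun j _ => Nat.zero_le _)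
      (Finset.mem_univ i)
  omega

lemma forward [Fintype A] [Nonempty A] (k : Fin n → ℕ) :
    ∀ N : ℕ, ∀ P : Set (W A n), ∀ hfin : P.Finite, MaxJoinlessCode P →
    (∀ i : Fin n, IsGreatest ((fun v : W A n => (v i).length) '' P) (k i)) →
    (∑ p ∈ hfin.toFinset, (Fintype.card A + 1) ^ defic k p) ≤ N →
    Relation.ReflTransGen RestrStep P (box A k) := by
  intro N
  induction N using Nat.strong_induction_on with
  | _ N IH =>
  intro P hfin hmax hk hm
  classical
  by_cases hall : ∀ p ∈ P, ∀ i, (p i).length = k i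
  · have hPbox : P = box A k := by
      apply Set.Subset.antisymm
      · intro p hp i; exact hall p hp i
      · intro u hu
        obtain ⟨q, hq, hj⟩ := hmax.2 u
        have : u = q := by
          funext i
          rcases hasJoin_iff.1 hj i with h | h
          · exact h.eq_of_length_le (by rw [hu i, hall q hq i])
          · exact (h.eq_of_length_le (by rw [hu i, hall q hq i])).symm
        rw [this]; exact hq
    rw [hPbox]
  · push_neg at hall
    obtain ⟨p, hp, i, hne⟩ := hall
    have hle : (p i).length ≤ k i := (hk i).2 ⟨p, hp, rfl⟩
    have hlt : (p i).length < k i := lt_of_le_of_ne hle hne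
    have hchfin : {w : W A n | ∃ a : A, w = child p i a}.Finite := by
      apply (Set.finite_range (child p i)).subset
      rintro w ⟨a, rfl⟩; exact ⟨a, rfl⟩
    have hQfin : (oneStep P p i).Finite := (hfin.diff (t := {p})).union hchfin
    have hQmax : MaxJoinlessCode (oneStep P p i) := oneStep_maximal hmax hp i
    have hk' : ∀ j : Fin n,
        IsGreatest ((fun v : W A n => (v j).length) '' (oneStep P p i)) (k j) := by
      intro j
      constructor
      · rcases eq_or_ne j i with rfl | hji
        · obtain ⟨q, hq, hqlen⟩ := (hk j).1
          have hqp : q ≠ p := by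
            rintro rfl; simp only at hqlen; omega
          exact ⟨q, mem_oneStep.2 (Or.inl ⟨hq, hqp⟩), hqlen⟩
        · obtain ⟨q, hq, hqlen⟩ := (hk j).1
          by_cases hqp : q = p
          · subst hqp
            obtain ⟨a⟩ := ‹Nonempty A›
            refine ⟨child q i a, mem_oneStep.2 (Or.inr ⟨a, rfl⟩), ?_⟩
            simp only [child_apply_ne _ _ _ hji]
            exact hqlen
          · exact ⟨q, mem_oneStep.2 (Or.inl ⟨hq, hqp⟩), hqlen⟩
      · rintro m ⟨w, hw, rfl⟩
        rcases mem_oneStep.1 hw with ⟨hw, _⟩ | ⟨a, rfl⟩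
        · exact (hk j).2 ⟨w, hw, rfl⟩
        · change (child p i a j).length ≤ k j
          rcases eq_or_ne j i with rfl | hji
          · simp only [child_apply_self, List.length_append, List.length_cons,
              List.length_nil]
            omega
          · rw [child_apply_ne _ _ _ hji]
            exact (hk j).2 ⟨p, hp, rfl⟩
    -- measure decreases
    have htoF : hQfin.toFinset
        = (hfin.toFinset.erase p) ∪ Finset.image (fun a => child p i a) Finset.univ := by
      ext w
      simp only [Set.Finite.mem_toFinset, mem_oneStep, Finset.mem_union, Finset.mem_erase,
        Finset.mem_image, Finset.mem_univ, true_and]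
      constructor
      · rintro (⟨h1, h2⟩ | ⟨a, rfl⟩)
        · exact Or.inl ⟨h2, h1⟩
        · exact Or.inr ⟨a, rfl⟩
      · rintro (⟨h1, h2⟩ | ⟨a, rfl⟩)
        · exact Or.inl ⟨h2, h1⟩
        · exact Or.inr ⟨a, rfl⟩
    have hdisj : Disjoint (hfin.toFinset.erase p)
        (Finset.image (fun a => child p i a) Finset.univ) := by
      rw [Finset.disjoint_left]
      intro w hw hwim
      simp only [Finset.mem_erase, Set.Finite.mem_toFinset] at hw
      simp only [Finset.mem_image, Finset.mem_univ, true_and] at hwim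
      obtain ⟨a, rfl⟩ := hwim
      exact child_not_mem hmax.1 hp hw.2 hw.1 rfl
    set c := Fintype.card A with hc
    set D := defic k p with hD
    have hD1 : 1 ≤ D := defic_pos hlt
    have hmeasQ : ∑ q ∈ hQfin.toFinset, (c + 1) ^ defic k q
        = (∑ q ∈ hfin.toFinset.erase p, (c + 1) ^ defic k q) + c * (c + 1) ^ (D - 1) := by
      rw [htoF, Finset.sum_union hdisj, Finset.sum_image (fun a _ b _ h => child_inj h)]
      congr 1
      have : ∀ a : A, defic k (child p i a) = D - 1 := fun a => by
        have := defic_child a hlt; omega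
      simp only [this, Finset.sum_const, Finset.card_univ, smul_eq_mul]
      rfl
    have hmeasP : ∑ q ∈ hfin.toFinset, (c + 1) ^ defic k q
        = (∑ q ∈ hfin.toFinset.erase p, (c + 1) ^ defic k q) + (c + 1) ^ D :=
      (Finset.sum_erase_add _ _ (hfin.mem_toFinset.2 hp)).symm
    have hcpos : 1 ≤ c := Fintype.card_pos
    have hlt' : ∑ q ∈ hQfin.toFinset, (c + 1) ^ defic k q
        < ∑ q ∈ hfin.toFinset, (c + 1) ^ defic k q := by
      rw [hmeasQ, hmeasP]
      apply Nat.add_lt_add_left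
      have hxpos : 1 ≤ (c + 1) ^ (D - 1) := Nat.one_le_pow _ _ (by omega)
      calc c * (c + 1) ^ (D - 1) < (c + 1) * (c + 1) ^ (D - 1) :=
            (Nat.mul_lt_mul_right hxpos).2 (by omega)
        _ = (c + 1) ^ (D - 1 + 1) := by rw [pow_succ]; ring
        _ = (c + 1) ^ D := by congr 1; omega
    exact Relation.ReflTransGen.head ⟨p, hp, i, rfl⟩
      (IH _ (lt_of_lt_of_le hlt' hm) _ hQfin hQmax hk' le_rfl)

lemma back [Nonempty A] (k : Fin n → ℕ) (P : Set (W A n))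
    (h : Relation.ReflTransGen RestrStep P (box A k)) :
    JoinlessCode P → MaxJoinlessCode P := by
  induction h using Relation.ReflTransGen.head_induction_on with
  | refl => exact fun _ => box_max k
  | head hstep _ ih =>
    intro hjl
    obtain ⟨p, hp, i, rfl⟩ := hstep
    exact oneStep_maximal_back hjl hp (ih (oneStep_joinless hjl hp i))

end MainLemmas

/-- A finite joinless code `P` is maximal iff it can be transformed into the
box code `A^{k_1} × … × A^{k_n}`, where `k_i = max{|v_i| : v ∈ P}`, by a
finite sequence of one-step restrictions. -/
theorem maxJoinless_iff_restricts_to_box {A : Type*} [Fintype A] [Nonempty A]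
    {n : ℕ} (hn : 1 ≤ n) (P : Set (W A n)) (hfin : P.Finite)
    (hjl : JoinlessCode P) (k : Fin n → ℕ)
    (hk : ∀ i : Fin n, IsGreatest ((fun v : W A n => (v i).length) '' P) (k i)) :
    MaxJoinlessCode P ↔ Relation.ReflTransGen RestrStep P (box A k) := by
  constructor
  · intro hmax
    exact forward k _ P hfin hmax hk le_rfl
  · exact fun h => back k P h hjl

end BrinThompson
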